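/- Let $(Q,*,/)$ be a 2-reductive quandle (satisfying $x*(y*z) = x*(y*u)$ for all $x,y,z,u$). Then for all integers $n,m$, the structure $(Q,*^n,*^m,/^m)$ is an oriented singquandle, where $x*^k y = \rho_y^k(x)$ and $x/^k y = \rho_y^{-k}(x)$ with $\rho_y(x) = x*y$. -/

import Mathlib

def IsRightQuasigroup {Q : Type*} (mul div : Q → Q → Q) : Prop :=
  (∀ x y, div (mul x y) y = x) ∧ (∀ x y, mul (div x y) y = x)

def IsQuandle {Q : Type*} (mul div : Q → Q → Q) : Prop :=
  IsRightQuasigroup mul div ∧ (∀ x, mul x x = x) ∧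
  (∀ x y z, mul (mul x y) z = mul (mul x z) (mul y z))

def IsOrientedSingquandle {Q : Type*} (cdot mul div : Q → Q → Q) : Prop :=
  IsQuandle mul div ∧
  (∀ x y z, mul (cdot x y) z = cdot (mul x z) (mul y z)) ∧
  (∀ x y z, mul (mul z y) x = mul (mul z (cdot x y)) (cdot (mul y x) x))

theorem two_reductive_singquandle {Q : Type*} (mul div : Q → Q → Q)
    (hq : IsQuandle mul div)
    (h2r : ∀ x y z u : Q, mul x (mul y z) = mul x (mul y u))
    (ρ : Q → Equiv.Perm Q) (hρ : ∀ y x, ρ y x = mul x y) (n m : ℤ) :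
    IsOrientedSingquandle (fun x y => ((ρ y) ^ n) x)
      (fun x y => ((ρ y) ^ m) x) (fun x y => ((ρ y) ^ (-m)) x) := by
  obtain ⟨⟨hdiv1, hdiv2⟩, hidem, hdist⟩ := hq
  -- key: ρ (mul y z) = ρ y
  have key : ∀ y z : Q, ρ (mul y z) = ρ y := by
    intro y z
    ext a
    rw [hρ, hρ, h2r a y z y, hidem]
  -- ρ (ρ z y) = ρ y
  have key' : ∀ z y : Q, ρ (ρ z y) = ρ y := by
    intro z y; rw [hρ]; exact key y z
  have keyinv : ∀ z y : Q, ρ ((ρ z)⁻¹ y) = ρ y := by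
    intro z y
    have := key' z ((ρ z)⁻¹ y)
    rw [← Equiv.Perm.mul_apply, mul_inv_cancel, Equiv.Perm.one_apply] at this
    exact this.symm
  -- zpow invariance
  have keyz : ∀ (k : ℤ) (z y : Q), ρ (((ρ z) ^ k) y) = ρ y := by
    intro k z y
    induction k using Int.induction_on generalizing y with
    | zero => simp
    | succ i ih =>
        rw [zpow_add_one, Equiv.Perm.mul_apply, ih, key']
    | pred i ih =>
        rw [zpow_sub_one, Equiv.Perm.mul_apply, ih, keyinv]
  -- commutation
  have hcomm : ∀ y z : Q, Commute (ρ y) (ρ z) := by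
    intro y z
    ext x
    simp only [Equiv.Perm.mul_apply, Equiv.Perm.coe_mul, Function.comp_apply]
    rw [hρ, hρ, hρ, hρ]
    rw [hdist x z y]
    exact (congrFun (congrArg mul (rfl)) _).trans
      (by rw [h2r (mul x y) z y z, hidem] )
  have hcommz : ∀ (k l : ℤ) (y z : Q) (x : Q),
      ((ρ y) ^ k) (((ρ z) ^ l) x) = ((ρ z) ^ l) (((ρ y) ^ k) x) := by
    intro k l y z x
    have := (hcomm y z).zpow_zpow k l
    calc ((ρ y) ^ k) (((ρ z) ^ l) x) = (((ρ y) ^ k) * ((ρ z) ^ l)) x := rfl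
      _ = (((ρ z) ^ l) * ((ρ y) ^ k)) x := by rw [this]
      _ = ((ρ z) ^ l) (((ρ y) ^ k) x) := rfl
  -- fixed point
  have hfix : ∀ (k : ℤ) (x : Q), ((ρ x) ^ k) x = x := by
    intro k x
    have h1 : ρ x x = x := by rw [hρ, hidem]
    have h1inv : (ρ x)⁻¹ x = x := (Equiv.symm_apply_eq _).mpr h1.symm
    induction k using Int.induction_on with
    | zero => simp
    | succ i ih =>
        rw [zpow_add_one, Equiv.Perm.mul_apply, h1, ih]
    | pred i ih =>
        rw [zpow_sub_one, Equiv.Perm.mul_apply, h1inv, ih]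
  refine ⟨⟨⟨?_, ?_⟩, ?_, ?_⟩, ?_, ?_⟩
  · intro x y
    simp only [← Equiv.Perm.mul_apply, ← zpow_add, neg_add_cancel, zpow_zero,
      Equiv.Perm.coe_one, id_eq]
  · intro x y
    simp only [← Equiv.Perm.mul_apply, ← zpow_add, add_neg_cancel, zpow_zero,
      Equiv.Perm.coe_one, id_eq]
  · intro x
    exact hfix m x
  · intro x y z
    dsimp only
    rw [keyz m z y, hcommz m m z y x]
  · intro x y z
    dsimp only
    rw [keyz m z y, hcommz m n z y x]
  · intro x y z
    dsimp only
    rw [keyz n y x, keyz n x (((ρ x) ^ m) y), keyz m x y, hcommz m m x y z]
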